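/- arXiv:2402.00382 — 4 statements merged into one kernel-verified Lean document; each statement's English description precedes it below -/
import Mathlib

section
/- Let n = d ≥ 2, B = √n, σ = R = 1, and p ∈ (0,1]. Then sup over X ∈ 𝒳_{n,n}(√n) and over θ* ∈ ℝ^n with ‖θ*‖_p ≤ 1 of E_{y ~ N(Xθ*, I_n)}[ inf_{λ > 0} ‖θ̂_λ(X,y) − θ*‖₂² ] ≥ 9/20000. -/
set_option maxHeartbeats 1000000


open MeasureTheory ProbabilityTheory Matrix
open scoped ENNReal NNReal

/-- The Gaussian noise distribution: `y` has independent coordinates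
`y i ~ N(mean i, sd²)`. -/
noncomputable def noise {m : ℕ} (mean : Fin m → ℝ) (sd : ℝ) :
    Measure (Fin m → ℝ) :=
  Measure.pi fun i => gaussianReal (mean i) (Real.toNNReal (sd ^ 2))

/-- The design class `𝒳_{n,d}(B)`: matrices with `(1/n) Xᵀ X ⪰ (1/B) I_d`. -/
def designClass (n d : ℕ) (B : ℝ) : Set (Matrix (Fin n) (Fin d) ℝ) :=
  {X | ((n : ℝ)⁻¹ • (Xᵀ * X) - B⁻¹ • (1 : Matrix (Fin d) (Fin d) ℝ)).PosSemidef}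

/-- The Lasso objective `(1/n)‖Xϑ − y‖₂² + 2λ‖ϑ‖₁`. -/
noncomputable def lassoObj (n d : ℕ) (lam : ℝ) (X : Matrix (Fin n) (Fin d) ℝ)
    (y : Fin n → ℝ) (t : Fin d → ℝ) : ℝ :=
  (n : ℝ)⁻¹ * ∑ j, (X.mulVec t j - y j) ^ 2 + 2 * lam * ∑ i, |t i|

section Helpers

lemma exp_half_le' : Real.exp (1/2) ≤ 2 := by
  nlinarith [Real.exp_one_lt_d9, Real.exp_pos (1/2),
    (by rw [← Real.exp_add]; norm_num : Real.exp (1/2) * Real.exp (1/2) = Real.exp 1)]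

lemma exp_two_le' : Real.exp 2 ≤ 9 := by
  nlinarith [Real.exp_one_lt_d9, Real.exp_pos 1,
    (by rw [← Real.exp_add]; norm_num : Real.exp 1 * Real.exp 1 = Real.exp 2)]

lemma sqrt_two_pi_le' : Real.sqrt (2 * Real.pi) ≤ 3 := by
  rw [show (3:ℝ) = Real.sqrt 9 by rw [show (9:ℝ) = 3^2 by norm_num, Real.sqrt_sq]; norm_num]
  exact Real.sqrt_le_sqrt (by nlinarith [Real.pi_le_four])

lemma sqrt_two_pi_pos' : 0 < Real.sqrt (2 * Real.pi) :=
  Real.sqrt_pos.mpr (by positivity)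

lemma gauss_icc_lb (m a b e : ℝ) (he : 0 ≤ e)
    (hpdf : ∀ x ∈ Set.Icc a b, e ≤ gaussianPDFReal m 1 x) :
    ENNReal.ofReal ((b - a) * e) ≤ gaussianReal m 1 (Set.Icc a b) := by
  rw [gaussianReal_apply m one_ne_zero]
  calc ENNReal.ofReal ((b - a) * e)
      = ENNReal.ofReal e * volume (Set.Icc a b) := by
        rw [Real.volume_Icc, ← ENNReal.ofReal_mul he]; ring_nf
    _ = ∫⁻ _ in Set.Icc a b, ENNReal.ofReal e := by rw [setLIntegral_const]
    _ ≤ ∫⁻ x in Set.Icc a b, gaussianPDF m 1 x := by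
        refine setLIntegral_mono' measurableSet_Icc fun x hx => ?_
        exact ENNReal.ofReal_le_ofReal (hpdf x hx)

lemma pdf_lb (m x C : ℝ) (h : (x - m)^2 ≤ C) :
    (Real.sqrt (2*Real.pi))⁻¹ * Real.exp (-(C/2)) ≤ gaussianPDFReal m 1 x := by
  unfold gaussianPDFReal
  push_cast
  rw [mul_one, mul_one]
  refine mul_le_mul_of_nonneg_left ?_ (by positivity)
  rw [Real.exp_le_exp, neg_div]
  linarith

lemma pdf_lb' (m x C D : ℝ) (h : (x - m)^2 ≤ C)
    (h1 : 3 * D ≤ Real.exp (-(C/2))) (hD : 0 ≤ D) :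
    D ≤ gaussianPDFReal m 1 x := by
  refine le_trans ?_ (pdf_lb m x C h)
  rw [le_inv_mul_iff₀ sqrt_two_pi_pos']
  calc Real.sqrt (2*Real.pi) * D ≤ 3 * D :=
        mul_le_mul_of_nonneg_right sqrt_two_pi_le' hD
    _ ≤ _ := h1

lemma exp_neg_half_ge' : (1:ℝ)/2 ≤ Real.exp (-(1/2)) := by
  rw [Real.exp_neg, le_inv_comm₀ (by norm_num) (Real.exp_pos _)]
  simpa using exp_half_le'

lemma exp_neg_two_ge' : (1:ℝ)/9 ≤ Real.exp (-(4/2)) := by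
  rw [show (-(4/2) : ℝ) = -2 by norm_num, Real.exp_neg,
    le_inv_comm₀ (by norm_num) (Real.exp_pos _)]
  simpa using exp_two_le'

lemma gaussA (m : ℝ) : ENNReal.ofReal (1/6) ≤ gaussianReal m 1 (Set.Iic m) := by
  refine le_trans ?_ (measure_mono (Set.Icc_subset_Iic_self (a := m - 1)))
  refine le_trans ?_ (gauss_icc_lb m (m-1) m (1/6) (by norm_num) ?_)
  · apply ENNReal.ofReal_le_ofReal; ring_nf; linarith
  · intro x hx
    refine pdf_lb' m x 1 (1/6) ?_ (by linarith [exp_neg_half_ge']) (by norm_num)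
    rcases hx with ⟨h1, h2⟩; nlinarith

lemma gaussB : ENNReal.ofReal (1/27) ≤ gaussianReal 0 1 (Set.Icc 1 2) := by
  refine le_trans ?_ (gauss_icc_lb 0 1 2 (1/27) (by norm_num) ?_)
  · apply ENNReal.ofReal_le_ofReal; ring_nf; linarith
  · intro x hx
    refine pdf_lb' 0 x 4 (1/27) ?_ (by linarith [exp_neg_two_ge']) (by norm_num)
    rcases hx with ⟨h1, h2⟩; nlinarith

lemma coord_ineq {n : ℕ} (lam : ℝ) (c : Fin n → ℝ) (y t : Fin n → ℝ)
    (H : ∀ u, lassoObj n n lam (Matrix.diagonal c) y t ≤ lassoObj n n lam (Matrix.diagonal c) y u)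
    (k : Fin n) (s : ℝ) :
    (n:ℝ)⁻¹ * (c k * t k - y k)^2 + 2*lam*|t k| ≤
      (n:ℝ)⁻¹ * (c k * s - y k)^2 + 2*lam*|s| := by
  have H2 := H (Function.update t k s)
  unfold lassoObj at H2
  simp only [Matrix.mulVec_diagonal] at H2
  have e1 : ∑ j ∈ Finset.univ.erase k, (c j * Function.update t k s j - y j)^2
      = ∑ j ∈ Finset.univ.erase k, (c j * t j - y j)^2 :=
    Finset.sum_congr rfl fun j hj => by
      rw [Function.update_of_ne (Finset.ne_of_mem_erase hj)]
  have e2 : ∑ j ∈ Finset.univ.erase k, |Function.update t k s j|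
      = ∑ j ∈ Finset.univ.erase k, |t j| :=
    Finset.sum_congr rfl fun j hj => by
      rw [Function.update_of_ne (Finset.ne_of_mem_erase hj)]
  rw [← Finset.add_sum_erase _ _ (Finset.mem_univ k),
      ← Finset.add_sum_erase _ _ (Finset.mem_univ k),
      ← Finset.add_sum_erase _ (fun j => (c j * Function.update t k s j - y j)^2) (Finset.mem_univ k),
      ← Finset.add_sum_erase _ (fun i => |Function.update t k s i|) (Finset.mem_univ k),
      e1, e2, Function.update_self] at H2
  rw [mul_add, mul_add, mul_add, mul_add] at H2
  linarith

lemma coord0_bound {nn lam t y r : ℝ} (hr : 1 ≤ r) (hn : nn = r^4)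
    (hy : y ≤ r) (hmu : 1/2 ≤ lam * r^2)
    (h : nn⁻¹ * (r * t - y)^2 + 2*lam*|t| ≤ nn⁻¹ * (r * (1/2) - y)^2 + 2*lam*|1/2|) :
    t ≤ 1/2 := by
  by_contra hc
  push_neg at hc
  have ht : |t| = t := abs_of_pos (by linarith)
  have habs : |(1:ℝ)/2| = 1/2 := by norm_num
  rw [ht, habs, hn] at h
  have hr0 : (0:ℝ) < r := by linarith
  have hne : r ≠ 0 := ne_of_gt hr0
  have hnpos : (0:ℝ) < r^4 := by positivity
  have hcanc : ∀ X : ℝ, r^4 * ((r^4)⁻¹ * X) = X := fun X => by field_simp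
  have h' := mul_le_mul_of_nonneg_left h (le_of_lt hnpos)
  rw [mul_add, mul_add, hcanc, hcanc] at h'
  have h2 : (r*t - y)^2 + 2*lam*t*r^4 ≤ (r/2 - y)^2 + lam*r^4 := by nlinarith [h']
  have d0 : 0 < t - 1/2 := by linarith
  have e1 : r*(t-1/2)*(r*t + r/2 - 2*y) + 2*lam*r^4*(t-1/2) ≤ 0 := by nlinarith [h2]
  have e2 : r*(t-3/2) ≤ r*t + r/2 - 2*y := by nlinarith [hy, hr0]
  have e2' : 0 ≤ r*(t-1/2) := by positivity
  have e3 : r*(t-1/2)*(r*(t-3/2)) + 2*lam*r^4*(t-1/2) ≤ 0 := by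
    nlinarith [e1, mul_le_mul_of_nonneg_left e2 e2']
  have hmu2 : r^2 ≤ 2*(lam * r^4) := by nlinarith [sq_nonneg r]
  have e4 : r^2*(t-1/2) ≤ 2*lam*r^4*(t-1/2) := by
    nlinarith [mul_le_mul_of_nonneg_right hmu2 (le_of_lt d0)]
  nlinarith [e3, e4, mul_pos (mul_pos hr0 hr0) (mul_pos d0 d0)]

lemma coordj_bound {nn lam t y w : ℝ} (hlam : 0 < lam) (hw : 1 ≤ w) (hn : nn = w^2)
    (hy : 1 ≤ y) (hmu : lam * w ≤ 1/2)
    (h : nn⁻¹ * (w * t - y)^2 + 2*lam*|t| ≤ nn⁻¹ * (w * (y/w - lam) - y)^2 + 2*lam*|y/w - lam|) :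
    1/(4*nn) ≤ t^2 := by
  have hw0 : (0:ℝ) < w := by linarith
  have hb : 1/w ≤ y/w := by gcongr
  have hlw : lam ≤ 1/(2*w) := by
    rw [le_div_iff₀ (by positivity)]; nlinarith
  have h12 : (1:ℝ)/(2*w) ≤ (y/w)/2 := by
    rw [div_le_div_iff₀ (by positivity) (by norm_num)]
    calc 1 * 2 = 2 * (1/w) * w := by field_simp
      _ ≤ 2 * (y/w) * w := by gcongr
      _ = y/w * (2*w) := by ring
  have hbl : lam ≤ (y/w)/2 := by linarith
  have hs : 0 < y/w - lam := by
    have h0' : (0:ℝ) < 1/(2*w) := by positivity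
    linarith
  have habs : |y/w - lam| = y/w - lam := abs_of_pos hs
  have hexp : w * (y/w - lam) - y = -(w*lam) := by field_simp; ring
  have hsq : (w*t - y)^2 = w^2 * (t - y/w)^2 := by field_simp
  rw [habs, hn, hexp, hsq] at h
  have hww : (w^2)⁻¹ * (w^2 * (t - y/w)^2) = (t - y/w)^2 := by field_simp
  have hww2 : (w^2)⁻¹ * (-(w*lam))^2 = lam^2 := by field_simp
  rw [hww, hww2] at h
  have key : (t - y/w + lam)^2 ≤ 0 := by nlinarith [h, le_abs_self t, hlam]
  have h0 : t - y/w + lam = 0 := by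
    have := le_antisymm key (sq_nonneg _)
    exact pow_eq_zero_iff two_ne_zero |>.mp this
  have ht2 : 1/(2*w) ≤ t := by
    have he : t = y/w - lam := by linarith
    rw [he]; linarith
  calc 1/(4*nn) = (1/(2*w))^2 := by rw [hn]; field_simp; ring
    _ ≤ t^2 := by nlinarith [ht2, show (0:ℝ) < 1/(2*w) by positivity]

end Helpers

/-- Corollary 1(a): for `n = d`, `B = √n`, `σ = R = 1` and `p ∈ (0,1]`, the
worst-case risk of the Lasso — even with the oracle choice of the
regularization parameter — is bounded below by the constant `9/20000`. -/
theorem lasso_suboptimal_weakly_sparse (n : ℕ) (hn : 2 ≤ n) (p : ℝ)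
    (hp : 0 < p) (hp1 : p ≤ 1)
    (lasso : ℝ → Matrix (Fin n) (Fin n) ℝ → (Fin n → ℝ) → Fin n → ℝ)
    (hlasso : ∀ lam : ℝ, 0 < lam → ∀ X y t,
      lassoObj n n lam X y (lasso lam X y) ≤ lassoObj n n lam X y t) :
    ENNReal.ofReal (9 / 20000) ≤
      ⨆ X : designClass n n (Real.sqrt n),
        ⨆ θ : {θ : Fin n → ℝ // ∑ i, |θ i| ^ p ≤ 1},
          ∫⁻ y, ENNReal.ofReal
              (⨅ lam : Set.Ioi (0 : ℝ), ∑ i, (lasso lam.1 X.1 y i - θ.1 i) ^ 2)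
            ∂ noise (X.1.mulVec θ.1) 1 := by
  haveI : NeZero n := ⟨by omega⟩
  have hn2 : (2:ℝ) ≤ (n:ℝ) := by exact_mod_cast hn
  set w : ℝ := Real.sqrt n with hw_def
  have hw1 : 1 ≤ w := by
    have := Real.sqrt_le_sqrt (show (1:ℝ) ≤ n by linarith)
    rwa [Real.sqrt_one] at this
  have hw0 : (0:ℝ) < w := by linarith
  have hw2 : w^2 = n := Real.sq_sqrt (by linarith)
  set r : ℝ := Real.sqrt w with hr_def
  have hr1 : 1 ≤ r := by
    have := Real.sqrt_le_sqrt hw1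
    rwa [Real.sqrt_one] at this
  have hr2 : r^2 = w := Real.sq_sqrt (by linarith)
  have hr4 : r^4 = n := by
    rw [show r^4 = (r^2)^2 by ring, hr2, hw2]
  set cvec : Fin n → ℝ := fun i => if i = 0 then r else w with hc_def
  set X : Matrix (Fin n) (Fin n) ℝ := Matrix.diagonal cvec with hX_def
  set θ : Fin n → ℝ := fun i => if i = 0 then 1 else 0 with hθ_def
  -- design class membership
  have hXmem : X ∈ designClass n n w := by
    have hdiag : (n:ℝ)⁻¹ • (Xᵀ * X) - w⁻¹ • (1 : Matrix (Fin n) (Fin n) ℝ)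
        = Matrix.diagonal (fun i => (n:ℝ)⁻¹ * (cvec i * cvec i) - w⁻¹) := by
      rw [hX_def, Matrix.diagonal_transpose, Matrix.diagonal_mul_diagonal]
      ext i j
      by_cases hij : i = j <;>
        simp [Matrix.diagonal_apply, hij, Matrix.one_apply, Matrix.sub_apply, smul_eq_mul]
    show ((n:ℝ)⁻¹ • (Xᵀ * X) - w⁻¹ • (1 : Matrix (Fin n) (Fin n) ℝ)).PosSemidef
    rw [hdiag]
    refine Matrix.posSemidef_diagonal_iff.mpr fun i => ?_
    by_cases hi : i = 0
    · have h1 : cvec i = r := by simp [hc_def, hi]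
      rw [h1, show (n:ℝ) = w^2 from hw2.symm,
        show r * r = w by rw [← hr2]; ring]
      have : ((w^2)⁻¹ * w - w⁻¹ : ℝ) = 0 := by field_simp; ring
      linarith
    · have h1 : cvec i = w := by simp [hc_def, hi]
      rw [h1, show (n:ℝ) = w^2 from hw2.symm]
      have h2 : ((w^2)⁻¹ * (w * w) : ℝ) = 1 := by field_simp
      have h3 : w⁻¹ ≤ 1 := by
        rw [← one_div, div_le_one (by linarith)]; linarith
      linarith
  -- theta membership
  have hθmem : ∑ i, |θ i| ^ p ≤ 1 := by
    have hsum : ∑ i, |θ i| ^ p = |θ 0| ^ p := by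
      refine Finset.sum_eq_single_of_mem 0 (Finset.mem_univ 0) fun i _ hi => ?_
      simp only [hθ_def, if_neg hi, abs_zero]
      exact Real.zero_rpow (ne_of_gt hp)
    rw [hsum]
    simp only [hθ_def, if_pos rfl, abs_one, Real.one_rpow]
    exact le_refl 1
  -- the mean vector
  have hmean : X.mulVec θ = fun i => if i = 0 then r else 0 := by
    funext i
    by_cases hi : i = 0 <;>
      simp [hX_def, Matrix.mulVec_diagonal, hc_def, hθ_def, hi]
  have hnoise : noise (X.mulVec θ) 1 =
      Measure.pi (fun i : Fin n => gaussianReal (if i = 0 then r else 0) 1) := by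
    rw [hmean]; unfold noise; norm_num
  set μ := Measure.pi (fun i : Fin n => gaussianReal (if i = 0 then r else 0) 1) with hμ_def
  -- the events
  set A : Fin n → Set (Fin n → ℝ) :=
    fun j => {y | y 0 ≤ r ∧ y j ∈ Set.Icc (1:ℝ) 2} with hA_def
  have hAmeas : ∀ j, MeasurableSet (A j) := by
    intro j
    have h1 : MeasurableSet {y : Fin n → ℝ | y 0 ≤ r} :=
      measurableSet_le (measurable_pi_apply 0) measurable_const
    have h2 : MeasurableSet {y : Fin n → ℝ | y j ∈ Set.Icc (1:ℝ) 2} :=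
      (measurable_pi_apply j) measurableSet_Icc
    exact h1.inter h2
  -- key pointwise bound
  have key : ∀ y : Fin n → ℝ,
      (∑ j ∈ Finset.univ.erase 0, if y ∈ A j then 1/(4*(n:ℝ)) else 0)
        ≤ ⨅ lam : Set.Ioi (0:ℝ), ∑ i, (lasso lam.1 X y i - θ i)^2 := by
    intro y
    haveI : Nonempty (Set.Ioi (0:ℝ)) := ⟨⟨1, by norm_num⟩⟩
    refine le_ciInf fun lamS => ?_
    obtain ⟨lam, hlam⟩ := lamS
    simp only [Set.mem_Ioi] at hlam
    set t : Fin n → ℝ := lasso lam X y with ht_def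
    have hbase : ∀ u, lassoObj n n lam (Matrix.diagonal cvec) y t ≤
        lassoObj n n lam (Matrix.diagonal cvec) y u := by
      intro u
      rw [← hX_def]
      exact hlasso lam hlam X y u
    have hco := coord_ineq lam cvec y t hbase
    by_cases hy : y 0 ≤ r
    · rcases le_total (lam * w) (1/2) with hmu | hmu
      · -- small lambda: noise coordinates survive
        have hstep : ∀ j ∈ Finset.univ.erase (0 : Fin n),
            (if y ∈ A j then 1/(4*(n:ℝ)) else 0) ≤ (t j - θ j)^2 := by
          intro j hj
          have hj0 : j ≠ 0 := Finset.ne_of_mem_erase hj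
          have hθj : θ j = 0 := by simp [hθ_def, hj0]
          rw [hθj, sub_zero]
          by_cases hyA : y ∈ A j
          · rw [if_pos hyA]
            have hyj : 1 ≤ y j := hyA.2.1
            have hcj : cvec j = w := by simp [hc_def, hj0]
            have hcoj := hco j (y j / w - lam)
            rw [hcj] at hcoj
            exact coordj_bound hlam hw1 hw2.symm hyj hmu hcoj
          · rw [if_neg hyA]; positivity
        calc (∑ j ∈ Finset.univ.erase 0, if y ∈ A j then 1/(4*(n:ℝ)) else 0)
            ≤ ∑ j ∈ Finset.univ.erase 0, (t j - θ j)^2 := Finset.sum_le_sum hstep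
          _ ≤ ∑ i, (t i - θ i)^2 :=
              Finset.sum_le_sum_of_subset_of_nonneg (Finset.subset_univ _)
                (fun i _ _ => sq_nonneg _)
      · -- big lambda: coordinate 0 is over-shrunk
        have ht0 : t 0 ≤ 1/2 := by
          have hc0 : cvec 0 = r := by simp [hc_def]
          have hco0 := hco 0 (1/2)
          rw [hc0] at hco0
          exact coord0_bound hr1 hr4.symm hy (by rw [hr2]; exact hmu) hco0
        have hθ0 : θ 0 = 1 := by simp [hθ_def]
        calc (∑ j ∈ Finset.univ.erase 0, if y ∈ A j then 1/(4*(n:ℝ)) else 0)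
            ≤ ∑ _j ∈ Finset.univ.erase (0:Fin n), 1/(4*(n:ℝ)) := by
              refine Finset.sum_le_sum fun j hj => ?_
              split
              · exact le_refl _
              · positivity
          _ = ((Finset.univ.erase (0:Fin n)).card : ℝ) * (1/(4*(n:ℝ))) := by
              rw [Finset.sum_const, nsmul_eq_mul]
          _ ≤ (n:ℝ) * (1/(4*(n:ℝ))) := by
              have hcard : ((Finset.univ.erase (0:Fin n)).card : ℝ) ≤ (n:ℝ) := by
                have h := Finset.card_le_univ (Finset.univ.erase (0:Fin n))
                simp only [Finset.card_univ, Fintype.card_fin] at h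
                exact_mod_cast h
              have hpos : (0:ℝ) ≤ 1/(4*(n:ℝ)) := by positivity
              exact mul_le_mul_of_nonneg_right hcard hpos
          _ = 1/4 := by field_simp
          _ ≤ (t 0 - θ 0)^2 := by rw [hθ0]; nlinarith [ht0]
          _ ≤ ∑ i, (t i - θ i)^2 :=
              Finset.single_le_sum (f := fun i => (t i - θ i)^2)
                (fun i _ => sq_nonneg _) (Finset.mem_univ 0)
    · -- y 0 > r: trivial
      have hzero : ∀ j ∈ Finset.univ.erase (0:Fin n),
          (if y ∈ A j then 1/(4*(n:ℝ)) else 0) = 0 := by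
        intro j _
        exact if_neg (fun hyA => hy hyA.1)
      rw [Finset.sum_eq_zero hzero]
      exact Finset.sum_nonneg fun i _ => sq_nonneg _
  -- measure of the events
  have hAμ : ∀ j : Fin n, j ≠ 0 →
      μ (A j) = (gaussianReal r 1 (Set.Iic r)) * (gaussianReal 0 1 (Set.Icc 1 2)) := by
    intro j hj
    have hAeq : A j = Set.pi Set.univ
        (fun i => if i = 0 then Set.Iic r else if i = j then Set.Icc (1:ℝ) 2 else Set.univ) := by
      ext y
      simp only [hA_def, Set.mem_setOf_eq, Set.mem_pi, Set.mem_univ, forall_const]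
      constructor
      · rintro ⟨h0, hj2⟩ i
        by_cases hi0 : i = 0
        · subst hi0; rw [if_pos rfl]; exact h0
        · by_cases hij : i = j
          · subst hij; rw [if_neg hi0, if_pos rfl]; exact hj2
          · rw [if_neg hi0, if_neg hij]; trivial
      · intro h
        refine ⟨?_, ?_⟩
        · have := h 0; rwa [if_pos rfl] at this
        · have := h j; rwa [if_neg hj, if_pos rfl] at this
    rw [hAeq, hμ_def, Measure.pi_pi]
    rw [← Finset.mul_prod_erase Finset.univ _ (Finset.mem_univ 0),
        ← Finset.mul_prod_erase _ _ (Finset.mem_erase.mpr ⟨hj, Finset.mem_univ j⟩)]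
    have hrest : ∏ i ∈ (Finset.univ.erase (0:Fin n)).erase j,
        (gaussianReal (if i = 0 then r else 0) 1)
          (if i = 0 then Set.Iic r else if i = j then Set.Icc (1:ℝ) 2 else Set.univ) = 1 := by
      refine Finset.prod_eq_one fun i hi => ?_
      have hi1 : i ≠ j := (Finset.mem_erase.mp hi).1
      have hi2 : i ≠ 0 := Finset.ne_of_mem_erase (Finset.mem_of_mem_erase hi)
      rw [if_neg hi2, if_neg hi1, if_neg hi2]
      exact measure_univ
    rw [hrest, mul_one, if_pos rfl, if_pos rfl, if_neg hj, if_neg hj, if_pos rfl]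
  -- assemble everything
  refine le_trans ?_ (le_iSup_of_le ⟨X, hXmem⟩ (le_iSup_of_le ⟨θ, hθmem⟩ le_rfl))
  show ENNReal.ofReal (9/20000) ≤
    ∫⁻ y, ENNReal.ofReal
        (⨅ lam : Set.Ioi (0:ℝ), ∑ i, (lasso lam.1 X y i - θ i)^2) ∂ noise (X.mulVec θ) 1
  rw [hnoise]
  calc ENNReal.ofReal (9/20000)
      ≤ ∑ _j ∈ Finset.univ.erase (0 : Fin n),
          ENNReal.ofReal (1/(4*(n:ℝ))) * (ENNReal.ofReal (1/6) * ENNReal.ofReal (1/27)) := by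
        rw [Finset.sum_const, Finset.card_erase_of_mem (Finset.mem_univ 0),
          Finset.card_univ, Fintype.card_fin]
        rw [← ENNReal.ofReal_mul (by positivity), ← ENNReal.ofReal_mul (by positivity)]
        rw [nsmul_eq_mul, ← ENNReal.ofReal_natCast (n-1), ← ENNReal.ofReal_mul (by positivity)]
        apply ENNReal.ofReal_le_ofReal
        have hcast : ((n-1 : ℕ) : ℝ) = (n:ℝ) - 1 := by
          rw [Nat.cast_sub (by omega)]; norm_num
        rw [hcast]
        have heq : ((n:ℝ)-1) * (1/(4*(n:ℝ)) * (1/6 * (1/27))) = ((n:ℝ)-1)/(648*(n:ℝ)) := by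
          field_simp; ring_nf
        rw [heq, le_div_iff₀ (by positivity)]
        nlinarith
    _ ≤ ∑ j ∈ Finset.univ.erase (0:Fin n), ENNReal.ofReal (1/(4*(n:ℝ))) * μ (A j) := by
        refine Finset.sum_le_sum fun j hj => ?_
        rw [hAμ j (Finset.ne_of_mem_erase hj)]
        exact mul_le_mul_right (mul_le_mul' (gaussA r) gaussB) _
    _ = ∑ j ∈ Finset.univ.erase (0:Fin n),
          ∫⁻ y, (A j).indicator (fun _ => ENNReal.ofReal (1/(4*(n:ℝ)))) y ∂μ := by
        refine Finset.sum_congr rfl fun j _ => ?_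
        rw [lintegral_indicator_const (hAmeas j)]
    _ = ∫⁻ y, ∑ j ∈ Finset.univ.erase (0:Fin n),
          (A j).indicator (fun _ => ENNReal.ofReal (1/(4*(n:ℝ)))) y ∂μ :=
        (lintegral_finset_sum _ (fun j _ => measurable_const.indicator (hAmeas j))).symm
    _ = ∫⁻ y, ENNReal.ofReal
          (∑ j ∈ Finset.univ.erase (0:Fin n), if y ∈ A j then 1/(4*(n:ℝ)) else 0) ∂μ := by
        refine lintegral_congr fun y => ?_
        rw [ENNReal.ofReal_sum_of_nonneg (fun j _ => by split <;> positivity)]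
        refine (Finset.sum_congr rfl fun j _ => ?_).symm
        by_cases hyA : y ∈ A j <;> simp [Set.indicator_apply, hyA]
    _ ≤ ∫⁻ y, ENNReal.ofReal
          (⨅ lam : Set.Ioi (0:ℝ), ∑ i, (lasso lam.1 X y i - θ i)^2) ∂μ :=
        lintegral_mono fun y => ENNReal.ofReal_le_ofReal (key y)
end

section
/- Let d ≥ 1, p ∈ (0,1], R > 0, and ζ > 0. Then sup over θ ∈ ℝ^d with ‖θ‖_p ≤ R of Σ_{i=1}^d min(θ_i², ζ²) ≤ R² · min( (ζ/R)²·d, (ζ/R)^{2−p}, 1 ). -/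
open Real

private lemma aux2 (p : ℝ) (hp : 0 < p) (hp1 : p ≤ 1) (x c : ℝ) (hc : 0 < c)
    (h : |x| ≤ c) : x ^ 2 ≤ |x| ^ p * c ^ (2 - p) := by
  rcases eq_or_ne x 0 with rfl | hx
  · simp
    positivity
  · have hax : 0 < |x| := abs_pos.mpr hx
    have h1 : x ^ 2 = |x| ^ p * |x| ^ (2 - p) := by
      rw [← Real.rpow_add hax, ← sq_abs x]
      norm_num
    rw [h1]
    gcongr
    linarith

private lemma aux (p : ℝ) (hp : 0 < p) (hp1 : p ≤ 1) (x c : ℝ) (hc : 0 < c) :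
    min (x ^ 2) (c ^ 2) ≤ |x| ^ p * c ^ (2 - p) := by
  rcases le_total |x| c with h | h
  · exact le_trans (min_le_left _ _) (aux2 p hp hp1 x c hc h)
  · refine le_trans (min_le_right _ _) ?_
    have h1 : c ^ 2 = c ^ p * c ^ (2 - p) := by
      rw [← Real.rpow_add hc, ← Real.rpow_natCast c 2]
      norm_num
    rw [h1]
    gcongr

/-- Lemma 2(a): bound on `sup_{‖θ‖_p ≤ R} Σᵢ min(θᵢ², ζ²)` for `p ∈ (0,1]`. -/
theorem sum_min_sq_le_weakly_sparse (d : ℕ) (hd : 1 ≤ d) (p R ζ : ℝ)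
    (hp : 0 < p) (hp1 : p ≤ 1) (hR : 0 < R) (hζ : 0 < ζ) :
    (⨆ θ : {θ : Fin d → ℝ // ∑ i, |θ i| ^ p ≤ R ^ p}, ∑ i, min (θ.1 i ^ 2) (ζ ^ 2)) ≤
      R ^ 2 * min ((ζ / R) ^ 2 * d) (min ((ζ / R) ^ (2 - p)) 1) := by
  have hRp : (0:ℝ) < R ^ p := Real.rpow_pos_of_pos hR p
  have hne : Nonempty {θ : Fin d → ℝ // ∑ i, |θ i| ^ p ≤ R ^ p} := by
    refine ⟨⟨0, ?_⟩⟩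
    simp [Real.zero_rpow hp.ne']
    positivity
  -- rewrite the RHS as a min of three explicit quantities
  have hRHS : R ^ 2 * min ((ζ / R) ^ 2 * (d:ℝ)) (min ((ζ / R) ^ (2 - p)) 1) =
      min (ζ ^ 2 * d) (min (ζ ^ (2 - p) * R ^ p) (R ^ 2)) := by
    rw [mul_min_of_nonneg _ _ (by positivity), mul_min_of_nonneg _ _ (by positivity)]
    congr 1
    · rw [div_pow]; field_simp
    · congr 1
      · have hRsplit : (R:ℝ) ^ (2:ℕ) = R ^ (2-p) * R ^ p := by
          rw [← Real.rpow_add hR, ← Real.rpow_natCast R 2]; norm_num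
        rw [Real.div_rpow hζ.le hR.le, hRsplit]
        have h0 : R ^ (2-p) ≠ 0 := (Real.rpow_pos_of_pos hR _).ne'
        field_simp
      · ring
  rw [hRHS]
  apply ciSup_le
  rintro ⟨θ, hθ⟩
  simp only
  refine le_min ?_ (le_min ?_ ?_)
  · calc ∑ i, min (θ i ^ 2) (ζ ^ 2) ≤ ∑ _i : Fin d, ζ ^ 2 :=
        Finset.sum_le_sum fun i _ => min_le_right _ _
    _ = ζ ^ 2 * d := by simp [mul_comm]
  · calc ∑ i, min (θ i ^ 2) (ζ ^ 2) ≤ ∑ i, |θ i| ^ p * ζ ^ (2 - p) :=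
        Finset.sum_le_sum fun i _ => aux p hp hp1 (θ i) ζ hζ
    _ = (∑ i, |θ i| ^ p) * ζ ^ (2 - p) := by rw [← Finset.sum_mul]
    _ ≤ R ^ p * ζ ^ (2 - p) := by
        apply mul_le_mul_of_nonneg_right hθ (by positivity)
    _ = ζ ^ (2 - p) * R ^ p := mul_comm _ _
  · have hbd : ∀ i : Fin d, |θ i| ≤ R := by
      intro i
      have h1 : |θ i| ^ p ≤ R ^ p := by
        refine le_trans ?_ hθ
        exact Finset.single_le_sum (f := fun j => |θ j| ^ p)
          (fun j _ => Real.rpow_nonneg (abs_nonneg _) p) (Finset.mem_univ i)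
      exact (Real.rpow_le_rpow_iff (abs_nonneg _) hR.le hp).mp h1
    calc ∑ i, min (θ i ^ 2) (ζ ^ 2) ≤ ∑ i, |θ i| ^ p * R ^ (2 - p) := by
          refine Finset.sum_le_sum fun i _ => ?_
          exact le_trans (min_le_left _ _) (aux2 p hp hp1 (θ i) R hR (hbd i))
    _ = (∑ i, |θ i| ^ p) * R ^ (2 - p) := by rw [← Finset.sum_mul]
    _ ≤ R ^ p * R ^ (2 - p) := mul_le_mul_of_nonneg_right hθ (by positivity)
    _ = R ^ 2 := by
        rw [← Real.rpow_add hR, ← Real.rpow_natCast R 2]; norm_num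
end

section
/- Let k ≥ 1, σ, B > 0, n ≥ 1, α ≥ 1, and set λ̄ = √(σ²α/(nB)). Then for every z ∈ ℝ^k: inf over λ ∈ (0, λ̄] of Σ_{i=1}^k (S_{λB/α}(z_i))² ≥ (1/4)·(σ²B/(nα)) · #{ i ∈ {1,…,k} : |z_i| / √(σ²B/(nα)) ≥ 3/2 }. -/
/-- The soft thresholding operator `S_η(v) = sign(v) · max(|v| − η, 0)`. -/
noncomputable def soft (η v : ℝ) : ℝ := Real.sign v * max (|v| - η) 0

lemma soft_sq (η v : ℝ) (hη : 0 ≤ η) : soft η v ^ 2 = max (|v| - η) 0 ^ 2 := by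
  unfold soft
  rcases lt_trichotomy v 0 with h | h | h
  · rw [Real.sign_of_neg h]; ring
  · subst h; simp [max_eq_right (neg_nonpos.mpr hη)]
  · rw [Real.sign_of_pos h]; ring

/-- Lemma 4 (lower bound on `T₁`): for every `z ∈ ℝᵏ`, the infimum over
`λ ∈ (0, λ̄]` of `Σᵢ S_{λB/α}(zᵢ)²`, where `λ̄ = √(σ²α/(nB))`, is at least
`(1/4)·(σ²B/(nα))` times the number of indices with
`|zᵢ|/√(σ²B/(nα)) ≥ 3/2`. -/
theorem lasso_T1_lower_bound (k n : ℕ) (hk : 1 ≤ k) (hn : 1 ≤ n)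
    (σ B α : ℝ) (hσ : 0 < σ) (hB : 0 < B) (hα : 1 ≤ α) (z : Fin k → ℝ) :
    (1 / 4) * (σ ^ 2 * B / (n * α)) *
        ((Finset.univ.filter fun i : Fin k =>
          3 / 2 ≤ |z i| / Real.sqrt (σ ^ 2 * B / (n * α))).card : ℝ) ≤
      ⨅ lam : Set.Ioc (0 : ℝ) (Real.sqrt (σ ^ 2 * α / (n * B))),
        ∑ i, soft (lam.1 * B / α) (z i) ^ 2 := by
  have hn' : (0 : ℝ) < n := by exact_mod_cast Nat.lt_of_lt_of_le Nat.zero_lt_one hn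
  have hα0 : (0 : ℝ) < α := lt_of_lt_of_le one_pos hα
  set c : ℝ := σ ^ 2 * B / (n * α) with hc
  have hc0 : 0 < c := by positivity
  set τ := Real.sqrt c with hτ
  have hτ0 : 0 < τ := Real.sqrt_pos.mpr hc0
  have hτsq : τ ^ 2 = c := Real.sq_sqrt hc0.le
  have hbar0 : 0 < Real.sqrt (σ ^ 2 * α / (n * B)) := by positivity
  have key : Real.sqrt (σ ^ 2 * α / (n * B)) * B / α = τ := by
    have h1 : σ ^ 2 * α / (n * B) = c * (α / B) ^ 2 := by
      rw [hc]; field_simp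
    rw [h1, Real.sqrt_mul hc0.le, Real.sqrt_sq (by positivity : (0:ℝ) ≤ α / B)]
    field_simp; exact hτ.symm
  have : Nonempty (Set.Ioc (0 : ℝ) (Real.sqrt (σ ^ 2 * α / (n * B)))) :=
    ⟨⟨_, hbar0, le_refl _⟩⟩
  apply le_ciInf
  rintro ⟨lam, hl0, hl1⟩
  set η := lam * B / α with hηdef
  have hη0 : 0 < η := by positivity
  have hη : η ≤ τ := by
    rw [hηdef, ← key]
    gcongr
  set S := Finset.univ.filter fun i : Fin k => 3 / 2 ≤ |z i| / τ with hS
  calc (1 / 4) * c * (S.card : ℝ) = ∑ _i ∈ S, c / 4 := by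
        rw [Finset.sum_const, nsmul_eq_mul]; ring
    _ ≤ ∑ i ∈ S, soft η (z i) ^ 2 := by
        apply Finset.sum_le_sum
        intro i hi
        have hzi : 3 / 2 * τ ≤ |z i| := by
          have := (Finset.mem_filter.mp hi).2
          exact (le_div_iff₀ hτ0).mp this
        have h1 : τ / 2 ≤ |z i| - η := by linarith
        have h2 : (0 : ℝ) ≤ τ / 2 := by positivity
        rw [soft_sq _ _ hη0.le, max_eq_left (le_trans h2 h1)]
        calc c / 4 = (τ / 2) ^ 2 := by rw [div_pow, hτsq]; ring
          _ ≤ (|z i| - η) ^ 2 := by gcongr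
    _ ≤ ∑ i, soft η (z i) ^ 2 := by
        apply Finset.sum_le_sum_of_subset_of_nonneg (Finset.filter_subset _ _)
        intro i _ _; positivity
end

section
/- Let k ≥ 1, σ, B > 0, n ≥ 1, α ≥ 1, and set λ̄ = √(σ²α/(nB)). Let η ∈ ℝ^k satisfy 0 ≤ η_i ≤ 2√(σ²Bα/n) for all i ∈ {1,…,k}. Then for every z ∈ ℝ^k: inf over λ ∈ [λ̄, ∞) of Σ_{i=1}^k (S_{λB}(z_i) − η_i)² ≥ (1/4)·Σ_{i=1}^k η_i² · 1{z_i ≤ η_i}. -/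
lemma soft_le_half (t e v : ℝ) (he : 0 ≤ e) (ht : e / 2 ≤ t) (hv : v ≤ e) :
    soft t v ≤ e / 2 := by
  unfold soft
  rcases lt_trichotomy v 0 with h | h | h
  · rw [Real.sign_of_neg h]
    have : 0 ≤ max (|v| - t) 0 := le_max_right _ _
    nlinarith []
  · simp only [h, Real.sign_zero, zero_mul]; linarith
  · rw [Real.sign_of_pos h, one_mul, abs_of_pos h]
    exact max_le (by linarith) (by linarith)

/-- Lemma 5 (lower bound on `T₂(η)`): if `0 ≤ ηᵢ ≤ 2√(σ²Bα/n)` for all `i`,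
then for every `z ∈ ℝᵏ`, the infimum over `λ ≥ λ̄ = √(σ²α/(nB))` of
`Σᵢ (S_{λB}(zᵢ) − ηᵢ)²` is at least `(1/4)·Σᵢ ηᵢ²·1{zᵢ ≤ ηᵢ}`. -/
theorem lasso_T2_lower_bound (k n : ℕ) (hk : 1 ≤ k) (hn : 1 ≤ n)
    (σ B α : ℝ) (hσ : 0 < σ) (hB : 0 < B) (hα : 1 ≤ α)
    (η : Fin k → ℝ)
    (hη : ∀ i, 0 ≤ η i ∧ η i ≤ 2 * Real.sqrt (σ ^ 2 * B * α / n))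
    (z : Fin k → ℝ) :
    (1 / 4) * ∑ i, η i ^ 2 * (if z i ≤ η i then (1 : ℝ) else 0) ≤
      ⨅ lam : Set.Ici (Real.sqrt (σ ^ 2 * α / (n * B))),
        ∑ i, (soft (lam.1 * B) (z i) - η i) ^ 2 := by
  set lb := Real.sqrt (σ ^ 2 * α / (n * B)) with hlb
  have hn0 : (0:ℝ) < n := by exact_mod_cast hn
  have hkey : lb * B = Real.sqrt (σ ^ 2 * B * α / n) := by
    rw [hlb, ← Real.sqrt_sq hB.le, ← Real.sqrt_mul (by positivity)]
    congr 1
    field_simp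
    ring
    rw [Real.sq_sqrt (sq_nonneg B)]
  haveI : Nonempty (Set.Ici lb) := ⟨⟨lb, Set.self_mem_Ici⟩⟩
  apply le_ciInf
  intro lam
  obtain ⟨l, hl⟩ := lam
  have hlB : lb * B ≤ l * B := by
    exact mul_le_mul_of_nonneg_right hl hB.le
  rw [Finset.mul_sum]
  apply Finset.sum_le_sum
  intro i _
  obtain ⟨h0, h1⟩ := hη i
  by_cases hz : z i ≤ η i
  · simp only [hz, if_pos, mul_one]
    have ht : η i / 2 ≤ l * B := by
      rw [← hkey] at h1; linarith
    have hs := soft_le_half (l * B) (η i) (z i) h0 ht hz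
    nlinarith
  · simp only [hz, if_neg, not_false_iff, mul_zero]
    positivity
end
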